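/- In the maximum heterogeneity ES model, if the subgroup-specific heterogeneity parameters are chosen as φ_s² = K·δ_s² for a constant K > 0 common to all subgroups and SNPs, then the approximate Bayes Factor ∏_s √(δ_s²/(δ_s²+φ_s²))·exp((T_s²/2)·φ_s²/(δ_s²+φ_s²)) equals (1+K)^{−S/2}·exp((K/(2(1+K)))·Σ_s T_s²), and therefore ranks SNPs in the same order as the statistic Σ_s T_s². -/

import Mathlib

open Real Finset

/-- Single-study approximate Bayes Factor. -/
noncomputable def ABFsingle (T2 delta phi : ℝ) : ℝ :=
  Real.sqrt (delta ^ 2 / (delta ^ 2 + phi ^ 2)) *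
    Real.exp (T2 / 2 * (phi ^ 2 / (delta ^ 2 + phi ^ 2)))

/-- Implicit p-value prior (maximum heterogeneity): with `φ_s² = K δ_s²`, the
maximum-heterogeneity ABF equals `(1+K)^(−S/2)·exp((K/(2(1+K)))·Σ_s T_s²)`, and
therefore ranks SNPs in the same order as `Σ_s T_s²`. -/
theorem implicit_pvalue_prior_maxH (S : ℕ) (hS : 1 ≤ S) (K : ℝ) (hK : 0 < K) :
    (∀ delta T : Fin S → ℝ, (∀ s, 0 < delta s) →
      (∏ s, ABFsingle ((T s) ^ 2) (delta s) (Real.sqrt K * delta s)) =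
        (1 + K) ^ (-(S : ℝ) / 2) * Real.exp (K / (2 * (1 + K)) * ∑ s, (T s) ^ 2)) ∧
    StrictMono (fun x : ℝ => (1 + K) ^ (-(S : ℝ) / 2) * Real.exp (K / (2 * (1 + K)) * x)) := by
  have h1K : (0:ℝ) < 1 + K := by linarith
  constructor
  · intro delta T hd
    have hfac : ∀ s, ABFsingle ((T s) ^ 2) (delta s) (Real.sqrt K * delta s) =
        Real.sqrt (1 / (1 + K)) * Real.exp (K / (2 * (1 + K)) * (T s) ^ 2) := by
      intro s
      have hδ : (delta s) ^ 2 ≠ 0 := pow_ne_zero _ (hd s).ne'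
      have hphi : (Real.sqrt K * delta s) ^ 2 = K * (delta s) ^ 2 := by
        rw [mul_pow, Real.sq_sqrt hK.le]
      unfold ABFsingle
      rw [hphi]
      congr 1
      · congr 1
        field_simp
        rw [div_self (hd s).ne']
      · congr 1
        field_simp
        rw [mul_div_cancel_right₀ _ (hd s).ne']
    rw [Finset.prod_congr rfl (fun s _ => hfac s), Finset.prod_mul_distrib,
      Finset.prod_const, ← Real.exp_sum, ← Finset.mul_sum]
    congr 1
    · rw [Real.sqrt_eq_rpow, ← Real.rpow_natCast ((1/(1+K)) ^ ((1:ℝ)/2)),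
        ← Real.rpow_mul (by positivity), one_div (1+K),
        ← Real.rpow_neg_one (1+K), ← Real.rpow_mul h1K.le]
      simp [Finset.card_univ]
      ring
  · intro a b hab
    have : Real.exp (K / (2 * (1 + K)) * a) < Real.exp (K / (2 * (1 + K)) * b) := by
      apply Real.exp_lt_exp.mpr
      have : 0 < K / (2 * (1 + K)) := by positivity
      nlinarith
    have hpos : (0:ℝ) < (1 + K) ^ (-(S : ℝ) / 2) := Real.rpow_pos_of_pos h1K _
    exact mul_lt_mul_of_pos_left this hpos
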